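/- Let a, b, p, s and r_1,…,r_s be positive integers with a ≤ b ≤ p - 1 and a + b ≥ p + 1. Then N(K_{r_1,…,r_s}, K_a) + N(K_{r_1,…,r_s}, K_b) ≤ N(K_{r_1,…,r_s}, K_{p-1}) + N(K_{r_1,…,r_s}, K_{a+b-p+1}). -/

import Mathlib

open SimpleGraph

/-- `N(H, G)`: the number of subgraphs of `G` isomorphic to `H`. -/
noncomputable def copyCount {α β : Type*} (H : SimpleGraph α) (G : SimpleGraph β) : ℕ :=
  Nat.card {G' : G.Subgraph // Nonempty (G'.coe ≃g H)}

/-- The complete multipartite graph `K_{r 0, …, r (s-1)}` with parts of sizes `r i`. -/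
abbrev KR {s : ℕ} (r : Fin s → ℕ) : SimpleGraph (Σ i : Fin s, Fin (r i)) :=
  completeMultipartiteGraph fun i => Fin (r i)

/-- Adjacency pattern of `G(n,c,k)` on indices: the first `k` indices are dominating and
the first `c+1-k` indices form a clique. -/
def gAdjNat (c k a b : ℕ) : Prop :=
  a < k ∨ b < k ∨ (a < c + 1 - k ∧ b < c + 1 - k)

/-- The graph `G(n,c,k) = K_k ∨ (K_{c+1-2k} + \overline{K_{n-c-1+k}})`: the first `k`
vertices are dominating, the first `c+1-k` vertices form a clique `K_k ∨ K_{c+1-2k}`, and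
the remaining `n-c-1+k` vertices are independent, adjacent exactly to the first `k`. -/
def gGraph (n c k : ℕ) : SimpleGraph (Fin n) where
  Adj v w := v ≠ w ∧ gAdjNat c k v.val w.val
  symm := ⟨by intro v w h; refine ⟨Ne.symm h.1, ?_⟩; unfold gAdjNat at *; tauto⟩
  loopless := ⟨by intro v h; exact h.1 rfl⟩

/-- `g_{r_1,…,r_s}(n,c,k)`: the number of copies of `K_{r_1,…,r_s}` in `G(n,c,k)`. -/
noncomputable def gCount {s : ℕ} (r : Fin s → ℕ) (n c k : ℕ) : ℕ :=
  _root_.copyCount (KR r) (gGraph n c k)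

/-- A graph has circumference `c` if it has a cycle of length `c` and no longer cycle. -/
def HasCircumference {V : Type*} (G : SimpleGraph V) (c : ℕ) : Prop :=
  (∃ (v : V) (w : G.Walk v v), w.IsCycle ∧ w.length = c) ∧
    ∀ (v : V) (w : G.Walk v v), w.IsCycle → w.length ≤ c

/-- A graph has detour order `p` if a longest path has `p` vertices. -/
def HasDetourOrder {V : Type*} (G : SimpleGraph V) (p : ℕ) : Prop :=
  (∃ (u v : V) (w : G.Walk u v), w.IsPath ∧ w.length + 1 = p) ∧
    ∀ (u v : V) (w : G.Walk u v), w.IsPath → w.length + 1 ≤ p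

/-- A graph is 2-connected if it has at least 3 vertices and deleting any single
vertex leaves a connected graph. -/
def TwoConnected {V : Type*} [Fintype V] (G : SimpleGraph V) : Prop :=
  3 ≤ Fintype.card V ∧ ∀ v : V, (G.induce ({v}ᶜ : Set V)).Connected

/-- A graph is traceable if it has a Hamiltonian path. -/
def Traceable {V : Type*} [DecidableEq V] (G : SimpleGraph V) : Prop :=
  ∃ (u v : V) (w : G.Walk u v), w.IsHamiltonian

/-- A graph has matching number `m` if it has a matching with `m` edges and no larger one. -/
def HasMatchingNumber {V : Type*} (G : SimpleGraph V) (m : ℕ) : Prop :=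
  (∃ M : G.Subgraph, M.IsMatching ∧ Nat.card M.edgeSet = m) ∧
    ∀ M : G.Subgraph, M.IsMatching → Nat.card M.edgeSet ≤ m

def toSmall {n m : ℕ} (S : Finset (Fin n)) (hS : S.card = m)
    (G' : (completeGraph (Fin n)).Subgraph) : (completeGraph (Fin m)).Subgraph where
  verts := Set.univ
  Adj x y := G'.Adj (S.orderIsoOfFin hS x) (S.orderIsoOfFin hS y)
  adj_sub := by
    intro v w h
    have h2 := G'.adj_sub h
    intro hvw
    exact h2 (by rw [hvw])
  edge_vert := fun _ => Set.mem_univ _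
  symm := ⟨fun v w h => G'.adj_symm h⟩

def toBig {n m : ℕ} (S : Finset (Fin n)) (hS : S.card = m)
    (G'' : (completeGraph (Fin m)).Subgraph) : (completeGraph (Fin n)).Subgraph where
  verts := ↑S
  Adj x y := ∃ (hx : x ∈ S) (hy : y ∈ S),
    G''.Adj ((S.orderIsoOfFin hS).symm ⟨x, hx⟩) ((S.orderIsoOfFin hS).symm ⟨y, hy⟩)
  adj_sub := by
    rintro x y ⟨hx, hy, h⟩
    have h2 := G''.adj_sub h
    rintro rfl
    exact h2 rfl
  edge_vert := fun ⟨hx, _, _⟩ => hx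
  symm := ⟨fun x y ⟨hx, hy, h⟩ => ⟨hy, hx, G''.adj_symm h⟩⟩

def isoSmall {n m : ℕ} (S : Finset (Fin n)) (hS : S.card = m)
    (G' : (completeGraph (Fin n)).Subgraph) (hv : G'.verts = ↑S) :
    (toSmall S hS G').coe ≃g G'.coe where
  toFun x := ⟨↑(S.orderIsoOfFin hS x.1), by rw [hv]; exact (S.orderIsoOfFin hS x.1).2⟩
  invFun y := ⟨(S.orderIsoOfFin hS).symm ⟨y.1, by rw [← Finset.mem_coe, ← hv]; exact y.2⟩,
    Set.mem_univ _⟩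
  left_inv := fun x => Subtype.ext ((S.orderIsoOfFin hS).symm_apply_apply x.1)
  right_inv := by intro y; ext; simp
  map_rel_iff' := Iff.rfl

def isoBig {n m : ℕ} (S : Finset (Fin n)) (hS : S.card = m)
    (G'' : (completeGraph (Fin m)).Subgraph) (hu : G''.verts = Set.univ) :
    (toBig S hS G'').coe ≃g G''.coe where
  toFun x := ⟨(S.orderIsoOfFin hS).symm ⟨x.1, x.2⟩, by rw [hu]; trivial⟩
  invFun y := ⟨↑(S.orderIsoOfFin hS y.1), (S.orderIsoOfFin hS y.1).2⟩
  left_inv := by intro x; ext; simp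
  right_inv := fun y => Subtype.ext ((S.orderIsoOfFin hS).symm_apply_apply y.1)
  map_rel_iff' := by
    intro a b
    constructor
    · exact fun h => ⟨a.2, b.2, h⟩
    · rintro ⟨_, _, h⟩; exact h

@[simp] lemma toSmall_adj {n m : ℕ} (S : Finset (Fin n)) (hS : S.card = m)
    (G' : (completeGraph (Fin n)).Subgraph) (u v : Fin m) :
    (toSmall S hS G').Adj u v ↔ G'.Adj (S.orderIsoOfFin hS u) (S.orderIsoOfFin hS v) := Iff.rfl

section Aux

variable {γ : Type*} [Fintype γ] (H : SimpleGraph γ)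

lemma verts_ncard {n : ℕ} (G' : (completeGraph (Fin n)).Subgraph)
    (h : Nonempty (G'.coe ≃g H)) : G'.verts.ncard = Fintype.card γ := by
  obtain ⟨e⟩ := h
  rw [← Nat.card_coe_set_eq, Nat.card_congr e.toEquiv, Nat.card_eq_fintype_card]

lemma small_verts_univ (G'' : (completeGraph (Fin (Fintype.card γ))).Subgraph)
    (h : Nonempty (G''.coe ≃g H)) : G''.verts = Set.univ := by
  apply Set.eq_of_subset_of_ncard_le (Set.subset_univ _)
  rw [verts_ncard H G'' h, Set.ncard_univ, Nat.card_eq_fintype_card, Fintype.card_fin]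

lemma toSmall_congr {n m : ℕ} (S₁ S₂ : Finset (Fin n)) (h₁ : S₁.card = m) (h₂ : S₂.card = m)
    (hS : S₁ = S₂) (G' : (completeGraph (Fin n)).Subgraph) :
    toSmall S₁ h₁ G' = toSmall S₂ h₂ G' := by subst hS; rfl

lemma big_small {n m : ℕ} (S : Finset (Fin n)) (hS : S.card = m)
    (G' : (completeGraph (Fin n)).Subgraph) (hv : G'.verts = ↑S) :
    toBig S hS (toSmall S hS G') = G' := by
  apply SimpleGraph.Subgraph.ext
  · exact hv.symm
  · funext x y
    apply propext
    constructor
    · rintro ⟨hx, hy, hadj⟩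
      simp only [toSmall_adj, OrderIso.apply_symm_apply] at hadj
      exact hadj
    · intro hadj
      have hx : x ∈ S := by rw [← Finset.mem_coe, ← hv]; exact G'.edge_vert hadj
      have hy : y ∈ S := by rw [← Finset.mem_coe, ← hv]; exact G'.edge_vert (G'.adj_symm hadj)
      refine ⟨hx, hy, ?_⟩
      simp only [toSmall_adj, OrderIso.apply_symm_apply]
      exact hadj

lemma small_big {n m : ℕ} (S : Finset (Fin n)) (hS : S.card = m)
    (G'' : (completeGraph (Fin m)).Subgraph) (hu : G''.verts = Set.univ) :
    toSmall S hS (toBig S hS G'') = G'' := by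
  apply SimpleGraph.Subgraph.ext
  · exact hu.symm
  · funext x y
    apply propext
    constructor
    · rintro ⟨hx, hy, hadj⟩
      have e1 : (⟨↑(S.orderIsoOfFin hS x), hx⟩ : {a // a ∈ S}) = S.orderIsoOfFin hS x :=
        Subtype.ext rfl
      have e2 : (⟨↑(S.orderIsoOfFin hS y), hy⟩ : {a // a ∈ S}) = S.orderIsoOfFin hS y :=
        Subtype.ext rfl
      rw [e1, e2, OrderIso.symm_apply_apply, OrderIso.symm_apply_apply] at hadj
      exact hadj
    · intro hadj
      refine ⟨(S.orderIsoOfFin hS x).2, (S.orderIsoOfFin hS y).2, ?_⟩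
      show G''.Adj ((S.orderIsoOfFin hS).symm (S.orderIsoOfFin hS x))
        ((S.orderIsoOfFin hS).symm (S.orderIsoOfFin hS y))
      rwa [OrderIso.symm_apply_apply, OrderIso.symm_apply_apply]

lemma fwd_card {n : ℕ} (p : {G' : (completeGraph (Fin n)).Subgraph // Nonempty (G'.coe ≃g H)}) :
    (Set.toFinite p.1.verts).toFinset.card = Fintype.card γ := by
  rw [← Set.ncard_eq_toFinset_card]; exact verts_ncard H p.1 p.2

noncomputable def fwd {n : ℕ}
    (p : {G' : (completeGraph (Fin n)).Subgraph // Nonempty (G'.coe ≃g H)}) :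
    {S : Finset (Fin n) // S.card = Fintype.card γ} ×
      {G'' : (completeGraph (Fin (Fintype.card γ))).Subgraph // Nonempty (G''.coe ≃g H)} :=
  (⟨(Set.toFinite p.1.verts).toFinset, fwd_card H p⟩,
   ⟨toSmall (Set.toFinite p.1.verts).toFinset (fwd_card H p) p.1,
    ⟨(isoSmall (Set.toFinite p.1.verts).toFinset (fwd_card H p) p.1
        (Set.Finite.coe_toFinset _).symm).trans p.2.some⟩⟩)

noncomputable def bwd {n : ℕ}
    (q : {S : Finset (Fin n) // S.card = Fintype.card γ} ×
      {G'' : (completeGraph (Fin (Fintype.card γ))).Subgraph // Nonempty (G''.coe ≃g H)}) :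
    {G' : (completeGraph (Fin n)).Subgraph // Nonempty (G'.coe ≃g H)} :=
  ⟨toBig q.1.1 q.1.2 q.2.1,
   ⟨(isoBig q.1.1 q.1.2 q.2.1 (small_verts_univ H q.2.1 q.2.2)).trans q.2.2.some⟩⟩

noncomputable def mainEquiv (n : ℕ) :
    {G' : (completeGraph (Fin n)).Subgraph // Nonempty (G'.coe ≃g H)} ≃
      {S : Finset (Fin n) // S.card = Fintype.card γ} ×
        {G'' : (completeGraph (Fin (Fintype.card γ))).Subgraph // Nonempty (G''.coe ≃g H)} where
  toFun := fwd H
  invFun := bwd H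
  left_inv := by
    intro p
    apply Subtype.ext
    show toBig _ _ (toSmall _ _ p.1) = p.1
    exact big_small _ _ p.1 (Set.Finite.coe_toFinset _).symm
  right_inv := by
    rintro ⟨⟨S, hS⟩, ⟨G'', h⟩⟩
    have hu : G''.verts = Set.univ := small_verts_univ H G'' h
    have hSS : (Set.toFinite (toBig S hS G'').verts).toFinset = S := by
      apply Finset.coe_injective
      rw [Set.Finite.coe_toFinset]
      rfl
    refine Prod.ext (Subtype.ext ?_) (Subtype.ext ?_)
    · exact hSS
    · show toSmall _ _ (toBig S hS G'') = G''
      exact (toSmall_congr _ S _ hS hSS _).trans (small_big S hS G'' hu)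

lemma copyCount_complete (n : ℕ) :
    _root_.copyCount H (completeGraph (Fin n)) =
      n.choose (Fintype.card γ) * _root_.copyCount H (completeGraph (Fin (Fintype.card γ))) := by
  unfold _root_.copyCount
  rw [Nat.card_congr (mainEquiv H n), Nat.card_prod]
  congr 1
  rw [Nat.card_eq_fintype_card, Fintype.card_finset_len, Fintype.card_fin]

end Aux

lemma choose_convex (k : ℕ) : ∀ (d x y : ℕ), x ≤ y →
    (x + d).choose (k + 1) + y.choose (k + 1) ≤ x.choose (k + 1) + (y + d).choose (k + 1) := by
  intro d
  induction d with
  | zero => intro x y _; simp [Nat.add_comm]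
  | succ d ih =>
    intro x y hxy
    have h2 := ih x y hxy
    have h3 : (x + d).choose k ≤ (y + d).choose k := Nat.choose_le_choose k (by omega)
    rw [show x + (d + 1) = (x + d) + 1 from rfl, show y + (d + 1) = (y + d) + 1 from rfl,
      Nat.choose_succ_succ, Nat.choose_succ_succ]
    simp only [Nat.succ_eq_add_one] at h2 h3 ⊢
    omega

/-- If `a ≤ b ≤ p - 1` and `a + b ≥ p + 1`, then `N(K_{r_1,…,r_s}, K_a) +
N(K_{r_1,…,r_s}, K_b) ≤ N(K_{r_1,…,r_s}, K_{p-1}) + N(K_{r_1,…,r_s}, K_{a+b-p+1})`. -/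
theorem statement_14 (a b p s : ℕ) (r : Fin s → ℕ)
    (ha : 0 < a) (hb : 0 < b) (hp : 0 < p) (hs : 0 < s) (hr : ∀ i, 0 < r i)
    (hab : a ≤ b) (hbp : b ≤ p - 1) (habp : p + 1 ≤ a + b) :
    _root_.copyCount (KR r) (completeGraph (Fin a)) + _root_.copyCount (KR r) (completeGraph (Fin b)) ≤
      _root_.copyCount (KR r) (completeGraph (Fin (p - 1))) +
        _root_.copyCount (KR r) (completeGraph (Fin (a + b - p + 1))) := by
  have hm : 1 ≤ Fintype.card (Σ i : Fin s, Fin (r i)) :=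
    Fintype.card_pos_iff.mpr ⟨⟨⟨0, hs⟩, ⟨0, hr _⟩⟩⟩
  rw [copyCount_complete (KR r) a, copyCount_complete (KR r) b,
      copyCount_complete (KR r) (p - 1), copyCount_complete (KR r) (a + b - p + 1),
      ← Nat.add_mul, ← Nat.add_mul]
  apply Nat.mul_le_mul_right
  obtain ⟨k, hk⟩ : ∃ k, Fintype.card (Σ i : Fin s, Fin (r i)) = k + 1 := ⟨Fintype.card (Σ i : Fin s, Fin (r i)) - 1, by omega⟩
  have key := choose_convex k (a - (a + b - p + 1)) (a + b - p + 1) b (by omega)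
  rw [show (a + b - p + 1) + (a - (a + b - p + 1)) = a by omega,
      show b + (a - (a + b - p + 1)) = p - 1 by omega] at key
  rw [hk]
  omega
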